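/- Let A be a Poincaré duality algebra of dimension n over a field 𝕜 which is moreover graded-commutative, i.e. a·b = (−1)^{(deg a)(deg b)} b·a for all homogeneous a, b ∈ A. Let τ : A ⊗ A → A ⊗ A be the Koszul twist, defined on homogeneous tensors by τ(x ⊗ y) = (−1)^{(deg x)(deg y)} y ⊗ x. Then τ(Δ_A) = (−1)^n Δ_A. -/

import Mathlib

open TensorProduct

/-- Let `A` be a graded-commutative Poincaré duality algebra of dimension `n` over a
field `𝕜`, and let `τ : A ⊗ A → A ⊗ A` be the Koszul twist, determined on homogeneous
tensors by `τ (x ⊗ y) = (-1)^{deg x · deg y} (y ⊗ x)`.  Then `τ (Δ_A) = (-1)^n Δ_A`. -/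
theorem koszul_twist_diagonal
    {𝕜 : Type*} [Field 𝕜] {A : Type*} [Ring A] [Algebra 𝕜 A]
    [FiniteDimensional 𝕜 A]
    (𝒜 : ℕ → Submodule 𝕜 A) [GradedAlgebra 𝒜] (n : ℕ)
    -- graded commutativity
    (hcomm : ∀ p q, ∀ x ∈ 𝒜 p, ∀ y ∈ 𝒜 q, x * y = ((-1 : 𝕜) ^ (p * q)) • (y * x))
    (ε : A →ₗ[𝕜] 𝕜)
    -- ε is supported in degree n
    (hsupp : ∀ p, p ≠ n → ∀ x ∈ 𝒜 p, ε x = 0)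
    -- the pairing `A^p × A^{n-p} → 𝕜` is nondegenerate on the left and on the right
    (hndl : ∀ p, ∀ x ∈ 𝒜 p, x ≠ 0 → ∃ q, p + q = n ∧ ∃ y ∈ 𝒜 q, ε (x * y) ≠ 0)
    (hndr : ∀ q, ∀ y ∈ 𝒜 q, y ≠ 0 → ∃ p, p + q = n ∧ ∃ x ∈ 𝒜 p, ε (x * y) ≠ 0)
    -- a homogeneous basis `a` with degrees `da` and dual basis `a'`
    {ι : Type*} [Fintype ι] [DecidableEq ι] (a : Module.Basis ι 𝕜 A) (da : ι → ℕ)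
    (ha : ∀ i, a i ∈ 𝒜 (da i))
    (a' : ι → A) (hdual_a : ∀ i j, ε (a i * a' j) = if i = j then 1 else 0)
    -- the Koszul twist
    (τ : A ⊗[𝕜] A →ₗ[𝕜] A ⊗[𝕜] A)
    (hτ : ∀ p q, ∀ x ∈ 𝒜 p, ∀ y ∈ 𝒜 q,
      τ (x ⊗ₜ[𝕜] y) = ((-1 : 𝕜) ^ (p * q)) • (y ⊗ₜ[𝕜] x)) :
    τ (∑ i, ((-1 : 𝕜) ^ da i) • (a i ⊗ₜ[𝕜] a' i))
      = ((-1 : 𝕜) ^ n) • ∑ i, ((-1 : 𝕜) ^ da i) • (a i ⊗ₜ[𝕜] a' i) := by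
  classical
  -- the pairing vanishes unless the degrees are complementary
  have hvan : ∀ p q : ℕ, ∀ x ∈ 𝒜 p, ∀ y ∈ 𝒜 q, p + q ≠ n → ε (x * y) = 0 := by
    intro p q x hx y hy h
    exact hsupp (p + q) h _ (SetLike.mul_mem_graded hx hy)
  -- Step A: each `a' i` is homogeneous of degree `n - da i`, and `da i ≤ n`
  have hstep : ∀ i, da i ≤ n ∧ a' i ∈ 𝒜 (n - da i) := by
    intro i
    set c : ℕ → A := fun q => (DirectSum.decompose 𝒜 (a' i) q : A) with hc
    have hcm : ∀ q, c q ∈ 𝒜 q := fun q => SetLike.coe_mem _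
    have hsum : ∑ q ∈ (DirectSum.decompose 𝒜 (a' i)).support, c q = a' i :=
      DirectSum.sum_support_decompose 𝒜 (a' i)
    have hx0 : ∀ j q, da j + q ≠ n → ε (a j * c q) = 0 :=
      fun j q h => hvan _ _ _ (ha j) _ (hcm q) h
    have hεsum : ∀ j, ∑ q ∈ (DirectSum.decompose 𝒜 (a' i)).support, ε (a j * c q)
        = (if j = i then (1 : 𝕜) else 0) := by
      intro j
      rw [← map_sum, ← Finset.mul_sum, hsum, hdual_a j i]
    -- `da i ≤ n`
    have hdn : da i ≤ n := by
      by_contra hgt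
      have h1 := hεsum i
      rw [if_pos rfl] at h1
      rw [Finset.sum_eq_zero (fun q _ => hx0 i q (by omega))] at h1
      exact zero_ne_one h1
    refine ⟨hdn, ?_⟩
    -- all components in degree `≠ n - da i` vanish
    have hcomp : ∀ q, q ≠ n - da i → c q = 0 := by
      intro q hq
      by_contra h0
      obtain ⟨p, hpq, x, hx, hεx⟩ := hndr q (c q) (hcm q) h0
      apply hεx
      have hbasis : ∀ j, ε (a j * c q) = 0 := by
        intro j
        by_cases hj : da j + q = n
        · have hji : j ≠ i := by
            rintro rfl
            exact hq (by omega)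
          have h2 := hεsum j
          rw [if_neg hji] at h2
          by_cases hqs : q ∈ (DirectSum.decompose 𝒜 (a' i)).support
          · rw [Finset.sum_eq_single_of_mem q hqs
              (fun q' _ hne => hx0 j q' (by omega))] at h2
            exact h2
          · have : c q = 0 := by
              have := DFinsupp.notMem_support_iff.mp hqs
              simpa [hc] using congrArg (Subtype.val) this
            rw [this, mul_zero, map_zero]
        · exact hx0 j q hj
      have hx' : x = ∑ m, a.repr x m • a m := (a.sum_repr x).symm
      rw [hx', Finset.sum_mul, map_sum, Finset.sum_eq_zero]
      intro m _
      rw [smul_mul_assoc, map_smul, hbasis m, smul_zero]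
    rw [← hsum]
    refine Submodule.sum_mem _ fun q hqs => ?_
    by_cases h : q = n - da i
    · exact h ▸ hcm q
    · rw [hcomp q h]; exact zero_mem _
  -- coordinates of `x` in the basis `a` are given by pairing with `a'`
  have hrepr : ∀ (x : A) (j : ι), a.repr x j = ε (x * a' j) := by
    intro x j
    conv_rhs => rw [← a.sum_repr x]
    rw [Finset.sum_mul, map_sum]
    simp only [smul_mul_assoc, map_smul, hdual_a, smul_eq_mul, mul_ite, mul_one, mul_zero]
    rw [Finset.sum_ite_eq' Finset.univ j fun m => a.repr x m, if_pos (Finset.mem_univ j)]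
  -- expansion of `a' i` in the basis `a`
  have hexp : ∀ i, a' i = ∑ j, ε (a' i * a' j) • a j := by
    intro i
    conv_lhs => rw [← a.sum_repr (a' i)]
    exact Finset.sum_congr rfl fun j _ => by rw [hrepr]
  -- the key scalar identity
  have key : ∀ i j, ((-1 : 𝕜) ^ da i * (-1 : 𝕜) ^ (da i * (n - da i))) * ε (a' i * a' j)
      = ((-1 : 𝕜) ^ n * (-1 : 𝕜) ^ da j) * ε (a' j * a' i) := by
    intro i j
    obtain ⟨hdi, hai⟩ := hstep i
    obtain ⟨hdj, haj⟩ := hstep j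
    by_cases h : da i + da j = n
    · have h1 : n - da i = da j := by omega
      have h2 : n - da j = da i := by omega
      rw [hcomm _ _ _ hai _ haj, map_smul, smul_eq_mul, h1, h2]
      rw [← mul_assoc]
      congr 1
      rw [← pow_add, ← pow_add, ← pow_add]
      have e1 : da i + da i * da j + da j * da i = da i + 2 * (da i * da j) := by ring
      have e2 : n + da j = da i + 2 * da j := by omega
      rw [e1, e2]
      simp [pow_add, pow_mul]
    · rw [hvan _ _ _ hai _ haj (by omega), hvan _ _ _ haj _ hai (by omega),
        mul_zero, mul_zero]
  -- now compute both sides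
  have L : τ (∑ i, ((-1 : 𝕜) ^ da i) • (a i ⊗ₜ[𝕜] a' i))
      = ∑ j, ∑ i, (((-1 : 𝕜) ^ da i * (-1 : 𝕜) ^ (da i * (n - da i))) * ε (a' i * a' j))
          • (a j ⊗ₜ[𝕜] a i) := by
    rw [map_sum, ← Finset.sum_comm]
    refine Finset.sum_congr rfl fun i _ => ?_
    rw [map_smul, hτ _ _ _ (ha i) _ (hstep i).2, smul_smul]
    conv_lhs => rw [hexp i]
    rw [sum_tmul, Finset.smul_sum]
    refine Finset.sum_congr rfl fun j _ => ?_
    rw [← smul_tmul', smul_smul]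
  have R : ((-1 : 𝕜) ^ n) • ∑ i, ((-1 : 𝕜) ^ da i) • (a i ⊗ₜ[𝕜] a' i)
      = ∑ j, ∑ i, (((-1 : 𝕜) ^ n * (-1 : 𝕜) ^ da j) * ε (a' j * a' i))
          • (a j ⊗ₜ[𝕜] a i) := by
    rw [Finset.smul_sum]
    refine Finset.sum_congr rfl fun j _ => ?_
    rw [smul_smul]
    conv_lhs => rw [hexp j]
    rw [tmul_sum, Finset.smul_sum]
    refine Finset.sum_congr rfl fun i _ => ?_
    rw [tmul_smul, smul_smul]
  rw [L, R]
  exact Finset.sum_congr rfl fun j _ => Finset.sum_congr rfl fun i _ => by rw [key i j]
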